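/- For every natural number k and every integer x with x ≡ 7629217 (mod 11184810), at least one of the primes 3, 5, 7, 13, 17, 241 divides x − 2^k. -/
import Mathlib

theorem erdos_divisibility (k : ℕ) (x : ℤ) (hx : x ≡ 7629217 [ZMOD 11184810]) :
    (3 : ℤ) ∣ x - 2 ^ k ∨ (5 : ℤ) ∣ x - 2 ^ k ∨ (7 : ℤ) ∣ x - 2 ^ k ∨
    (13 : ℤ) ∣ x - 2 ^ k ∨ (17 : ℤ) ∣ x - 2 ^ k ∨ (241 : ℤ) ∣ x - 2 ^ k := by
  have hmod : k % 24 < 24 := Nat.mod_lt _ (by norm_num)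
  have key : ∀ r, r < 24 → ((2:ZMod 3)^r = 7629217 ∨ (2:ZMod 5)^r = 7629217 ∨
      (2:ZMod 7)^r = 7629217 ∨ (2:ZMod 13)^r = 7629217 ∨ (2:ZMod 17)^r = 7629217 ∨
      (2:ZMod 241)^r = 7629217) := by decide
  have hconv : ∀ (p:ℕ) [NeZero p], ((p:ℤ) ∣ 11184810) → (2:ZMod p)^24 = 1 →
      (2:ZMod p)^(k%24) = 7629217 → (p:ℤ) ∣ x - 2^k := by
    intro p _ hd h24 h
    have hpow : (2:ZMod p)^k = (2:ZMod p)^(k%24) := by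
      conv_lhs => rw [← Nat.div_add_mod k 24]
      rw [pow_add, pow_mul, h24, one_pow, one_mul]
    have h1 : (2:ZMod p)^k = 7629217 := by rw [hpow, h]
    have h3 : ((x:ℤ):ZMod p) = ((7629217:ℤ):ZMod p) := by
      rw [ZMod.intCast_eq_intCast_iff]
      exact hx.of_dvd (by exact_mod_cast hd)
    have h0 : ((x - 2^k : ℤ) : ZMod p) = 0 := by
      push_cast
      rw [h3]
      push_cast
      rw [h1]
      ring
    exact (ZMod.intCast_zmod_eq_zero_iff_dvd _ p).mp h0
  rcases key (k % 24) hmod with h|h|h|h|h|h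
  · exact Or.inl (hconv 3 (by norm_num) (by decide) h)
  · exact Or.inr (Or.inl (hconv 5 (by norm_num) (by decide) h))
  · exact Or.inr (Or.inr (Or.inl (hconv 7 (by norm_num) (by decide) h)))
  · exact Or.inr (Or.inr (Or.inr (Or.inl (hconv 13 (by norm_num) (by decide) h))))
  · exact Or.inr (Or.inr (Or.inr (Or.inr (Or.inl (hconv 17 (by norm_num) (by decide) h)))))
  · exact Or.inr (Or.inr (Or.inr (Or.inr (Or.inr (hconv 241 (by norm_num) (by decide) h)))))
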